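/- In a valid modular DRUP proof π of the unsatisfiability of Φ_s ∧ Φ_m, every clause copied from module s to module m is entailed by Φ_s together with the backward clauses copied so far: for any step c_i = (cp(s), m, cls) in π, (L_B(π^i) ∧ Φ_s) ⊨ cls; symmetrically, for any step c_j = (cp(m), s, cls), (L_F(π^j) ∧ Φ_m) ⊨ cls. -/

import Mathlib

/-- Propositional variables. -/
abbrev Var := ℕ
/-- A literal is a variable together with a polarity. -/
abbrev Lit := Var × Bool
/-- A clause is a finite set of literals. -/
abbrev Clause := Finset Lit
/-- A total truth assignment. -/
abbrev Assignment := Var → Bool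

/-- Negation of a literal. -/
def Lit.neg (l : Lit) : Lit := (l.1, !l.2)

/-- An assignment satisfies a literal. -/
def satLit (σ : Assignment) (l : Lit) : Prop := σ l.1 = l.2
/-- An assignment satisfies a clause (some literal is true). -/
def satClause (σ : Assignment) (C : Clause) : Prop := ∃ l ∈ C, satLit σ l
/-- An assignment satisfies a set of clauses. -/
def satSet (σ : Assignment) (Γ : Set Clause) : Prop := ∀ C ∈ Γ, satClause σ C
/-- Semantic consequence: every model of Γ satisfies C. -/
def entails (Γ : Set Clause) (C : Clause) : Prop :=
  ∀ σ : Assignment, satSet σ Γ → satClause σ C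

/-- Unit-propagation closure: the least set of literals containing the
assumptions `A` and closed under the unit-propagation rule for clauses of `Γ`:
if all literals of a clause but one are falsified (their negations derived),
the remaining literal is derived. -/
inductive UPC (Γ : Set Clause) (A : Set Lit) : Lit → Prop
  | assm {l : Lit} : l ∈ A → UPC Γ A l
  | prop {C : Clause} {l : Lit} : C ∈ Γ → l ∈ C →
      (∀ l' ∈ C, l' ≠ l → UPC Γ A (Lit.neg l')) → UPC Γ A l

/-- Unit propagation from `Γ` under assumptions `A` reaches a conflict:
some clause of `Γ` has all its literals falsified by the closure. -/
def upConflict (Γ : Set Clause) (A : Set Lit) : Prop :=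
  ∃ C ∈ Γ, ∀ l ∈ C, UPC Γ A (Lit.neg l)

/-- `RUP Γ C` (written `Γ ⊢_UP C`): unit propagation from `Γ` together with the
negations of the literals of `C` reaches a conflict. -/
def RUP (Γ : Set Clause) (C : Clause) : Prop :=
  upConflict Γ {l | ∃ m ∈ C, l = Lit.neg m}

/-- The two modules: secondary `s` and main `m`. -/
inductive ModIdx | s | m
deriving DecidableEq

/-- A step of a modular DRUP proof. -/
inductive MStep
  | asserted (idx : ModIdx) (c : Clause)
  | rup (idx : ModIdx) (c : Clause)
  | cp (src dst : ModIdx) (c : Clause)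
  | del (idx : ModIdx) (c : Clause)
deriving DecidableEq

/-- A step adds clause `c` to module `idx` (by assertion, rup, or copy into `idx`). -/
def MStep.addsTo : MStep → ModIdx → Clause → Prop
  | .asserted i c, j, d => i = j ∧ c = d
  | .rup i c, j, d => i = j ∧ c = d
  | .cp _ i c, j, d => i = j ∧ c = d
  | .del _ _, _, _ => False

/-- Active clauses of module `idx`: added to `idx` and not later deleted from `idx`. -/
def mactive (π : List MStep) (idx : ModIdx) : Set Clause :=
  {c | ∃ i, ∃ hi : i < π.length, (π[i]'hi).addsTo idx c ∧
      ∀ k, ∀ hk : k < π.length, i < k → (π[k]'hk) ≠ MStep.del idx c}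

/-- All clauses asserted into module `idx`. -/
def allasserted (π : List MStep) (idx : ModIdx) : Set Clause :=
  {c | MStep.asserted idx c ∈ π}

/-- Validity of a modular DRUP proof: every rup step is RUP w.r.t. the active
clauses of its module, every copy step's clause is RUP in its source module,
and the final step adds ⊥ to module `m` (by rup or by copy from `s`). -/
def validModular (π : List MStep) : Prop :=
  (∀ i, ∀ hi : i < π.length, ∀ idx c,
      (π[i]'hi) = MStep.rup idx c → RUP (mactive (π.take i) idx) c) ∧
  (∀ i, ∀ hi : i < π.length, ∀ src dst c,
      (π[i]'hi) = MStep.cp src dst c → RUP (mactive (π.take i) src) c) ∧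
  ∃ hne : π ≠ [],
    π.getLast hne = MStep.rup ModIdx.m ∅ ∨ π.getLast hne = MStep.cp ModIdx.s ModIdx.m ∅

/-- The proof contains no deletion steps. -/
def noDel (π : List MStep) : Prop := ∀ st ∈ π, ∀ idx c, st ≠ MStep.del idx c

/-- Backward clauses of a prefix: clauses copied from `m` to `s`. -/
def LB (π : List MStep) : Set Clause := {c | MStep.cp ModIdx.m ModIdx.s c ∈ π}
/-- Forward clauses of a prefix: clauses copied from `s` to `m`. -/
def LF (π : List MStep) : Set Clause := {c | MStep.cp ModIdx.s ModIdx.m c ∈ π}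

lemma satLit_neg_iff (σ : Assignment) (l : Lit) : satLit σ (Lit.neg l) ↔ ¬ satLit σ l := by
  simp [satLit, Lit.neg, Bool.eq_not_iff]

lemma upc_sound {Γ : Set Clause} {A : Set Lit} {σ : Assignment}
    (hΓ : satSet σ Γ) (hA : ∀ l ∈ A, satLit σ l) :
    ∀ l, UPC Γ A l → satLit σ l := by
  intro l h
  induction h with
  | assm h => exact hA _ h
  | @prop C l hC hl hnn ih =>
    obtain ⟨l', hl', hsat⟩ := hΓ _ hC
    by_cases heq : l' = l
    · exact heq ▸ hsat
    · exact absurd hsat ((satLit_neg_iff σ l').mp (ih _ hl' heq))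

lemma rup_sound {Γ : Set Clause} {C : Clause} (h : RUP Γ C) : entails Γ C := by
  intro σ hσ
  by_contra hC
  have hA : ∀ l ∈ {l | ∃ m ∈ C, l = Lit.neg m}, satLit σ l := by
    rintro l ⟨m, hm, rfl⟩
    exact (satLit_neg_iff σ m).mpr (fun h' => hC ⟨m, hm, h'⟩)
  obtain ⟨D, hD, hall⟩ := h
  obtain ⟨l, hl, hsat⟩ := hσ _ hD
  exact ((satLit_neg_iff σ l).mp (upc_sound hσ hA _ (hall l hl))) hsat

lemma entails_mono {Γ Δ : Set Clause} {C : Clause} (h : Γ ⊆ Δ) :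
    entails Γ C → entails Δ C :=
  fun he σ hσ => he σ (fun D hD => hσ D (h hD))

lemma entails_cut {Γ Δ : Set Clause} {C : Clause} (h : entails Γ C)
    (h2 : ∀ D ∈ Γ, entails Δ D) : entails Δ C :=
  fun σ hσ => h σ (fun D hD => h2 D hD σ hσ)

lemma mem_mactive_iff {π : List MStep} (hnd : noDel π) {idx : ModIdx} {c : Clause} :
    c ∈ mactive π idx ↔ ∃ i, ∃ hi : i < π.length, (π[i]'hi).addsTo idx c := by
  constructor
  · rintro ⟨i, hi, h, -⟩; exact ⟨i, hi, h⟩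
  · rintro ⟨i, hi, h⟩
    exact ⟨i, hi, h, fun k hk _ => hnd _ (List.getElem_mem hk) _ _⟩

lemma noDel_take {π : List MStep} (hnd : noDel π) (i : ℕ) : noDel (π.take i) :=
  fun st hst => hnd st ((List.take_prefix i π).subset hst)

lemma modidx_eq {x a b : ModIdx} (hab : a ≠ b) : x = a ∨ x = b := by
  cases x <;> cases a <;> cases b <;> simp_all

/-- Every clause active in module `a` is entailed by `Φ` together with the
clauses copied from the other module `b` into `a`. -/
lemma mactive_entailed (π : List MStep) (Φ : Set Clause) (a b : ModIdx) (hab : a ≠ b)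
    (hval1 : ∀ i, ∀ hi : i < π.length, ∀ idx c,
      (π[i]'hi) = MStep.rup idx c → RUP (mactive (π.take i) idx) c)
    (hval2 : ∀ i, ∀ hi : i < π.length, ∀ src dst c,
      (π[i]'hi) = MStep.cp src dst c → RUP (mactive (π.take i) src) c)
    (hnd : noDel π)
    (hΦ : allasserted π a ⊆ Φ) :
    ∀ i, ∀ c ∈ mactive (π.take i) a,
      entails ({c | MStep.cp b a c ∈ π.take i} ∪ Φ) c := by
  intro i
  induction i using Nat.strong_induction_on with
  | _ i IH =>
    intro c hc
    rw [mem_mactive_iff (noDel_take hnd i)] at hc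
    obtain ⟨j, hj, hadd⟩ := hc
    have hji : j < i := lt_of_lt_of_le hj (by simp [List.length_take])
    have hjπ : j < π.length := lt_of_lt_of_le hj (by simp [List.length_take])
    have hget : (π.take i)[j]'hj = π[j]'hjπ := List.getElem_take
    -- helper to close the RUP cases
    have hrupcase : RUP (mactive (π.take j) a) c →
        entails ({c | MStep.cp b a c ∈ π.take i} ∪ Φ) c := by
      intro hr
      refine entails_cut (rup_sound hr) ?_
      intro D hD
      refine entails_mono ?_ (IH j hji D hD)
      apply Set.union_subset_union_left
      intro x hx
      have htt : π.take j = (π.take i).take j := by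
        rw [List.take_take, min_eq_left (le_of_lt hji)]
      rw [htt] at hx
      exact (List.take_prefix j (π.take i)).subset hx
    rw [hget] at hadd
    cases hstep : π[j]'hjπ with
    | asserted idx c' =>
      rw [hstep] at hadd
      rw [hadd.1, hadd.2] at hstep
      have hmem : MStep.asserted a c ∈ π := hstep ▸ List.getElem_mem hjπ
      exact fun σ hσ => hσ c (Or.inr (hΦ hmem))
    | rup idx c' =>
      rw [hstep] at hadd
      rw [hadd.1, hadd.2] at hstep
      exact hrupcase (hval1 j hjπ _ _ hstep)
    | cp src dst c' =>
      rw [hstep] at hadd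
      rw [hadd.1, hadd.2] at hstep
      rcases modidx_eq (x := src) hab with rfl | rfl
      · exact hrupcase (hval2 j hjπ _ _ _ hstep)
      · have hmem : MStep.cp src a c ∈ π.take i := by
          have h2 : (π.take i)[j]'hj ∈ π.take i := List.getElem_mem hj
          rwa [hget, hstep] at h2
        exact fun σ hσ => hσ c (Or.inl hmem)
    | del idx c' =>
      rw [hstep] at hadd
      exact hadd.elim

/-- in a valid modular DRUP proof (without deletions) of the
unsatisfiability of `Φs ∧ Φm`, every clause copied from `s` to `m` at step `i`
is entailed by `Φs` together with the backward clauses copied so far, and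
symmetrically for clauses copied from `m` to `s`. -/
theorem copied_clauses_entailed (π : List MStep) (Φs Φm : Set Clause)
    (hval : validModular π) (hnd : noDel π)
    (hs : allasserted π ModIdx.s ⊆ Φs) (hm : allasserted π ModIdx.m ⊆ Φm) :
    (∀ i, ∀ hi : i < π.length, ∀ cls : Clause,
        (π[i]'hi) = MStep.cp ModIdx.s ModIdx.m cls →
        entails (LB (π.take i) ∪ Φs) cls) ∧
    (∀ j, ∀ hj : j < π.length, ∀ cls : Clause,
        (π[j]'hj) = MStep.cp ModIdx.m ModIdx.s cls →
        entails (LF (π.take j) ∪ Φm) cls) := by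
  obtain ⟨hval1, hval2, -⟩ := hval
  constructor
  · intro i hi cls hcp
    have hr := hval2 i hi _ _ _ hcp
    refine entails_cut (rup_sound hr) ?_
    intro D hD
    exact mactive_entailed π Φs ModIdx.s ModIdx.m (by simp) hval1 hval2 hnd hs i D hD
  · intro j hj cls hcp
    have hr := hval2 j hj _ _ _ hcp
    refine entails_cut (rup_sound hr) ?_
    intro D hD
    exact mactive_entailed π Φm ModIdx.m ModIdx.s (by simp) hval1 hval2 hnd hm j D hD
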